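/- Suppose f* is known and the step-sizes of Subgradient Descent are chosen as α_i := (f(x^i) − f*)/‖g_i‖² when f(x^i) > f* (in which case g_i ≠ 0 automatically) and α_i := 0 when f(x^i) = f*. If every chosen subgradient satisfies ‖g_i‖ ≤ M, then for all integers k ≥ i ≥ 0: f_b^k ≤ f* + M·Dist(x^i, Opt)/√(k − i + 1). -/

import Mathlib

set_option maxHeartbeats 1000000
open scoped RealInnerProductSpace

/-- `p` is the Euclidean projection of `u` onto `Q`. -/
def IsProj {n : ℕ} (Q : Set (EuclideanSpace ℝ (Fin n)))
    (u p : EuclideanSpace ℝ (Fin n)) : Prop :=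
  p ∈ Q ∧ ∀ w ∈ Q, dist p u ≤ dist w u

theorem IsProj.nonexp {n : ℕ} {Q : Set (EuclideanSpace ℝ (Fin n))}
    (hQcv : Convex ℝ Q) {u p z : EuclideanSpace ℝ (Fin n)}
    (hp : IsProj Q u p) (hz : z ∈ Q) : ‖p - z‖ ≤ ‖u - z‖ := by
  haveI : Nonempty Q := ⟨⟨p, hp.1⟩⟩
  have h1 : ∀ w : Q, ‖u - p‖ ≤ ‖u - (w : EuclideanSpace ℝ (Fin n))‖ := by
    intro w
    have := hp.2 w w.2
    rw [dist_eq_norm, dist_eq_norm] at this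
    rw [norm_sub_rev u p, norm_sub_rev u _]
    exact this
  have h2 : BddBelow (Set.range fun w : Q => ‖u - (w : EuclideanSpace ℝ (Fin n))‖) :=
    ⟨0, by rintro r ⟨w, rfl⟩; exact norm_nonneg _⟩
  have hinf : ‖u - p‖ = ⨅ w : Q, ‖u - (w : EuclideanSpace ℝ (Fin n))‖ :=
    le_antisymm (le_ciInf h1) (ciInf_le h2 ⟨p, hp.1⟩)
  have hvar := (norm_eq_iInf_iff_real_inner_le_zero hQcv hp.1).mp hinf z hz
  have key : ‖p - z‖ ^ 2 ≤ ‖u - z‖ ^ 2 := by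
    have e : u - z = (u - p) - (z - p) := by abel
    have hexp : ‖u - z‖ ^ 2 = ‖u - p‖ ^ 2 - 2 * ⟪u - p, z - p⟫ + ‖z - p‖ ^ 2 := by
      rw [e, norm_sub_sq_real]
    rw [norm_sub_rev p z]
    nlinarith [sq_nonneg (‖u - p‖)]
  nlinarith [norm_nonneg (p - z), norm_nonneg (u - z)]

/-- Subgradient Descent with the Polyak step-size when `f*` is known. -/
theorem subgradient_descent_known_fstar {n : ℕ} (Q : Set (EuclideanSpace ℝ (Fin n)))
    (hQne : Q.Nonempty) (hQcl : IsClosed Q) (hQcv : Convex ℝ Q)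
    (f : EuclideanSpace ℝ (Fin n) → ℝ) (hfc : ConvexOn ℝ Q f)
    (fstar : ℝ) (hattain : ∃ z ∈ Q, f z = fstar) (hmin : ∀ z ∈ Q, fstar ≤ f z)
    (M : ℝ)
    (x g : ℕ → EuclideanSpace ℝ (Fin n)) (α : ℕ → ℝ)
    (hx0 : x 0 ∈ Q)
    (hsub : ∀ i, ∀ w ∈ Q, f (x i) + ⟪g i, w - x i⟫ ≤ f w)
    (hgM : ∀ i, ‖g i‖ ≤ M)
    (hα : ∀ i, (fstar < f (x i) → α i = (f (x i) - fstar) / ‖g i‖ ^ 2) ∧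
               (f (x i) = fstar → α i = 0))
    (hupd : ∀ i, IsProj Q (x i - α i • g i) (x (i + 1)))
    (i k : ℕ) (hik : i ≤ k) :
    (Finset.range (k + 1)).inf' Finset.nonempty_range_add_one (fun l => f (x l)) ≤
      fstar + M * Metric.infDist (x i) {z ∈ Q | f z = fstar} /
        Real.sqrt ((k : ℝ) - (i : ℝ) + 1) := by
  obtain ⟨z0, hz0Q, hz0f⟩ := hattain
  have hxQ : ∀ l, x l ∈ Q := by
    intro l
    induction l with
    | zero => exact hx0
    | succ l ih => exact (hupd l).1
  set fb := (Finset.range (k + 1)).inf' Finset.nonempty_range_add_one (fun l => f (x l)) with hfbdef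
  have hfb_le : ∀ l, l ≤ k → fb ≤ f (x l) := fun l hl =>
    Finset.inf'_le _ (Finset.mem_range.mpr (Nat.lt_succ_of_le hl))
  have hfstar_fb : fstar ≤ fb :=
    Finset.le_inf' _ _ (fun l _ => hmin _ (hxQ l))
  have hM0 : 0 ≤ M := le_trans (norm_nonneg _) (hgM 0)
  have hNpos : (0 : ℝ) < (k : ℝ) - (i : ℝ) + 1 := by
    have : (i : ℝ) ≤ (k : ℝ) := Nat.cast_le.mpr hik
    linarith
  set s := Real.sqrt ((k : ℝ) - (i : ℝ) + 1) with hs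
  have hsqrt : 0 < s := Real.sqrt_pos.mpr hNpos
  rcases hM0.lt_or_eq with hM | hM
  · -- 0 < M
    have core : ∀ z, z ∈ Q → f z = fstar → fb ≤ fstar + M * ‖x i - z‖ / s := by
      intro z hzQ hzf
      have key : ∀ l, ‖x (l + 1) - z‖ ^ 2 + (f (x l) - fstar) ^ 2 / M ^ 2 ≤ ‖x l - z‖ ^ 2 := by
        intro l
        have hnon : ‖x (l + 1) - z‖ ≤ ‖(x l - α l • g l) - z‖ :=
          (hupd l).nonexp hQcv hzQ
        have hsq : ‖x (l + 1) - z‖ ^ 2 ≤ ‖(x l - α l • g l) - z‖ ^ 2 :=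
          pow_le_pow_left₀ (norm_nonneg _) hnon 2
        have hexp : ‖(x l - α l • g l) - z‖ ^ 2
            = ‖x l - z‖ ^ 2 - 2 * α l * ⟪g l, x l - z⟫ + α l ^ 2 * ‖g l‖ ^ 2 := by
          have e : (x l - α l • g l) - z = (x l - z) - α l • g l := by abel
          rw [e, norm_sub_sq_real, real_inner_smul_right, norm_smul, Real.norm_eq_abs,
            mul_pow, sq_abs, real_inner_comm]
          ring
        rcases (hmin (x l) (hxQ l)).lt_or_eq with hlt | heq0
        · -- fstar < f (x l)
          have hS : 0 < f (x l) - fstar := by linarith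
          have hgne : g l ≠ 0 := by
            intro h0
            have h := hsub l z hzQ
            rw [h0] at h
            simp only [inner_zero_left, add_zero] at h
            linarith [hzf ▸ h]
          have hg2 : 0 < ‖g l‖ ^ 2 := pow_pos (norm_pos_iff.mpr hgne) 2
          have hG : ‖g l‖ ^ 2 ≤ M ^ 2 := pow_le_pow_left₀ (norm_nonneg _) (hgM l) 2
          have hin : f (x l) - fstar ≤ ⟪g l, x l - z⟫ := by
            have h := hsub l z hzQ
            have e2 : z - x l = -(x l - z) := by abel
            rw [e2, inner_neg_right] at h
            linarith [hzf]
          have hα1 : α l = (f (x l) - fstar) / ‖g l‖ ^ 2 := (hα l).1 hlt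
          rw [hα1] at hsq hexp
          set S := f (x l) - fstar with hSdef
          set G := ‖g l‖ ^ 2 with hGdef
          have e3 : (S / G) ^ 2 * G = S ^ 2 / G := by field_simp
          have e4 : 2 * (S / G) * S ≤ 2 * (S / G) * ⟪g l, x l - z⟫ :=
            mul_le_mul_of_nonneg_left hin (by positivity)
          have e5 : 2 * (S / G) * S = 2 * (S ^ 2 / G) := by field_simp
          have e6 : S ^ 2 / M ^ 2 ≤ S ^ 2 / G :=
            div_le_div_of_nonneg_left (sq_nonneg S) hg2 hG
          linarith [hsq, hexp, e3, e4, e5, e6]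
        · -- fstar = f (x l)
          have hα0 : α l = 0 := (hα l).2 heq0.symm
          have h1 : 2 * α l * ⟪g l, x l - z⟫ = 0 := by rw [hα0]; ring
          have h2 : α l ^ 2 * ‖g l‖ ^ 2 = 0 := by rw [hα0]; ring
          have h3 : (f (x l) - fstar) ^ 2 / M ^ 2 = 0 := by rw [← heq0]; simp
          linarith [hsq, hexp]
      have hsum : ∀ m : ℕ, ‖x (i + m + 1) - z‖ ^ 2
          + (∑ j ∈ Finset.range (m + 1), (f (x (i + j)) - fstar) ^ 2) / M ^ 2
          ≤ ‖x i - z‖ ^ 2 := by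
        intro m
        induction m with
        | zero => simpa using key i
        | succ m ih =>
          have hk := key (i + m + 1)
          rw [Finset.sum_range_succ, add_div]
          have e : i + (m + 1) + 1 = i + m + 1 + 1 := by ring
          rw [e]
          have e2 : i + (m + 1) = i + m + 1 := by ring
          rw [e2]
          linarith [ih, hk]
      have hsum_k := hsum (k - i)
      have hki : i + (k - i) = k := Nat.add_sub_cancel' hik
      rw [hki] at hsum_k
      have hterm : ∀ j ∈ Finset.range (k - i + 1),
          (fb - fstar) ^ 2 ≤ (f (x (i + j)) - fstar) ^ 2 := by
        intro j hj
        have hj' : i + j ≤ k := by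
          have := Finset.mem_range.mp hj; omega
        have h1 : fb ≤ f (x (i + j)) := hfb_le _ hj'
        have h0 : 0 ≤ fb - fstar := by linarith
        have := pow_le_pow_left₀ h0 (by linarith : fb - fstar ≤ f (x (i + j)) - fstar) 2
        exact this
      have hsum_lb : ((k - i + 1 : ℕ) : ℝ) * (fb - fstar) ^ 2
          ≤ ∑ j ∈ Finset.range (k - i + 1), (f (x (i + j)) - fstar) ^ 2 := by
        have := Finset.card_nsmul_le_sum (Finset.range (k - i + 1))
          (fun j => (f (x (i + j)) - fstar) ^ 2) ((fb - fstar) ^ 2) hterm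
        simpa [Finset.card_range, nsmul_eq_mul] using this
      have hM2 : (0 : ℝ) < M ^ 2 := by positivity
      have hsum_ub : (∑ j ∈ Finset.range (k - i + 1), (f (x (i + j)) - fstar) ^ 2)
          ≤ M ^ 2 * ‖x i - z‖ ^ 2 := by
        have hA : 0 ≤ ‖x (k + 1) - z‖ ^ 2 := sq_nonneg _
        have h5 : (∑ j ∈ Finset.range (k - i + 1), (f (x (i + j)) - fstar) ^ 2) / M ^ 2
            ≤ ‖x i - z‖ ^ 2 := by linarith
        calc (∑ j ∈ Finset.range (k - i + 1), (f (x (i + j)) - fstar) ^ 2)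
            = (∑ j ∈ Finset.range (k - i + 1), (f (x (i + j)) - fstar) ^ 2) / M ^ 2 * M ^ 2 := by
              field_simp
          _ ≤ ‖x i - z‖ ^ 2 * M ^ 2 := mul_le_mul_of_nonneg_right h5 hM2.le
          _ = M ^ 2 * ‖x i - z‖ ^ 2 := by ring
      have hNr : ((k - i + 1 : ℕ) : ℝ) = (k : ℝ) - (i : ℝ) + 1 := by
        rw [Nat.cast_add, Nat.cast_sub hik, Nat.cast_one]
      have hfinal2 : ((k : ℝ) - (i : ℝ) + 1) * (fb - fstar) ^ 2 ≤ M ^ 2 * ‖x i - z‖ ^ 2 := by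
        rw [← hNr]; exact le_trans hsum_lb hsum_ub
      have hb0 : 0 ≤ fb - fstar := by linarith
      have hbig : (fb - fstar) * s ≤ M * ‖x i - z‖ := by
        have hlhs0 : 0 ≤ (fb - fstar) * s := mul_nonneg hb0 hsqrt.le
        have hrhs0 : 0 ≤ M * ‖x i - z‖ := mul_nonneg hM.le (norm_nonneg _)
        have hsqs : ((fb - fstar) * s) ^ 2 ≤ (M * ‖x i - z‖) ^ 2 := by
          rw [mul_pow, mul_pow, hs, Real.sq_sqrt hNpos.le]
          nlinarith [hfinal2]
        nlinarith [hlhs0, hrhs0, hsqs]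
      have h7 : fb - fstar ≤ M * ‖x i - z‖ / s := (le_div_iff₀ hsqrt).mpr hbig
      linarith
    set d := Metric.infDist (x i) {z ∈ Q | f z = fstar} with hd
    have hOptne : Set.Nonempty {z ∈ Q | f z = fstar} := ⟨z0, hz0Q, hz0f⟩
    refine le_of_forall_pos_le_add fun ε hε => ?_
    have hδ : 0 < ε * s / M := by positivity
    obtain ⟨z, hzOpt, hzd⟩ := (Metric.infDist_lt_iff hOptne).mp
      (by rw [← hd]; linarith : Metric.infDist (x i) {z ∈ Q | f z = fstar} < d + ε * s / M)
    have hc := core z hzOpt.1 hzOpt.2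
    have hdist : ‖x i - z‖ = dist (x i) z := (dist_eq_norm _ _).symm
    have hmono : M * ‖x i - z‖ / s ≤ M * (d + ε * s / M) / s := by
      gcongr
      rw [hdist]; exact hzd.le
    have heq : M * (d + ε * s / M) / s = M * d / s + ε := by
      field_simp
    linarith [hc, hmono, heq.le, heq.ge]
  · -- M = 0
    have hg0 : g i = 0 := by
      have h := hgM i; rw [← hM] at h; exact norm_le_zero_iff.mp h
    have hfi : f (x i) ≤ fstar := by
      have h := hsub i z0 hz0Q
      rw [hg0] at h
      simp only [inner_zero_left, add_zero] at h
      linarith [hz0f ▸ h]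
    have hb : fb ≤ fstar := le_trans (hfb_le i hik) hfi
    rw [← hM]
    simpa using hb
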